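/- Let r₁ > r₂ > 0 and let ℓ ≈ 1.95 be the unique positive solution of 2(1+x³)(γ + ψ(1/(1+x))) + x² + x + 2(x² − x)ψ'(1/(1+x)) = 0. If x = r₁/r₂ > ℓ, then the coefficient L(r₁,r₂) = 2(r₁³+r₂³)(γ + ψ(r₂/(r₁+r₂))) + r₁²r₂ + r₂²r₁ + 2(r₁²r₂ − r₂²r₁)ψ'(r₂/(r₁+r₂)) is strictly positive. (Specifically: show that the function h(x) = 2(1+x³)(γ+ψ(1/(1+x))) + x² + x + 2(x²−x)ψ'(1/(1+x)) satisfies h(1) < 0 and h(x) → +∞ as x → ∞, so a positive root exists.) -/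

import Mathlib

open Real Filter

/-- The digamma function `ψ = Γ'/Γ`. -/
noncomputable def digamma (x : ℝ) : ℝ := deriv Real.Gamma x / Real.Gamma x

/-- The trigamma function `ψ'`. -/
noncomputable def trigamma (x : ℝ) : ℝ := deriv digamma x

/-- `h(x) = 2(1+x³)(γ + ψ(1/(1+x))) + x² + x + 2(x² − x)ψ'(1/(1+x))`. -/
noncomputable def hfun (x : ℝ) : ℝ :=
  2 * (1 + x ^ 3) * (Real.eulerMascheroniConstant + digamma (1 / (1 + x)))
    + x ^ 2 + x + 2 * (x ^ 2 - x) * trigamma (1 / (1 + x))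

/-- The first-order coefficient `L(r₁, r₂)` in the expansion of `Q₁`. -/
noncomputable def Lcoeff (r₁ r₂ : ℝ) : ℝ :=
  2 * (r₁ ^ 3 + r₂ ^ 3) * (Real.eulerMascheroniConstant + digamma (r₂ / (r₁ + r₂)))
    + r₁ ^ 2 * r₂ + r₂ ^ 2 * r₁
    + 2 * (r₁ ^ 2 * r₂ - r₂ ^ 2 * r₁) * trigamma (r₂ / (r₁ + r₂))

open Set Topology in
section
lemma ne_neg_nat {s : ℂ} (hs : 0 < s.re) : ∀ m : ℕ, s ≠ -m := by
  intro m h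
  rw [h] at hs
  simp only [Complex.neg_re, Complex.natCast_re] at hs
  have : (0:ℝ) ≤ (m:ℝ) := m.cast_nonneg
  linarith

lemma gammaC_analytic : AnalyticOnNhd ℂ Complex.Gamma {s : ℂ | 0 < s.re} := by
  refine DifferentiableOn.analyticOnNhd (fun s hs => ?_) (isOpen_lt continuous_const Complex.continuous_re)
  exact (Complex.differentiableAt_Gamma s (ne_neg_nat hs)).differentiableWithinAt

lemma gammaC_deriv_analytic : AnalyticOnNhd ℂ (deriv Complex.Gamma) {s : ℂ | 0 < s.re} :=
  gammaC_analytic.deriv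

lemma gammaC_deriv2_analytic : AnalyticOnNhd ℂ (deriv (deriv Complex.Gamma)) {s : ℂ | 0 < s.re} :=
  gammaC_deriv_analytic.deriv

lemma memU {x : ℝ} (hx : 0 < x) : (x : ℂ) ∈ {s : ℂ | 0 < s.re} := by simpa using hx

lemma hasDerivAt_realGamma {x : ℝ} (hx : 0 < x) :
    HasDerivAt Real.Gamma ((deriv Complex.Gamma x).re) x := by
  have h := (Complex.differentiableAt_Gamma _ (ne_neg_nat (memU hx))).hasDerivAt
  have h2 := h.real_of_complex
  refine h2.congr_of_eventuallyEq (Filter.Eventually.of_forall fun y => ?_)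
  simp only [Complex.Gamma_ofReal, Complex.ofReal_re]

lemma hasDerivAt_P {x : ℝ} (hx : 0 < x) :
    HasDerivAt (fun y : ℝ => (deriv Complex.Gamma y).re)
      ((deriv (deriv Complex.Gamma) x).re) x := by
  have h := ((gammaC_deriv_analytic _ (memU hx)).differentiableAt).hasDerivAt
  exact h.real_of_complex

lemma digamma_eq {x : ℝ} (hx : 0 < x) :
    digamma x = (deriv Complex.Gamma x).re / Real.Gamma x := by
  rw [digamma, (hasDerivAt_realGamma hx).deriv]

lemma hasDerivAt_digamma {x : ℝ} (hx : 0 < x) :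
    HasDerivAt digamma
      (((deriv (deriv Complex.Gamma) x).re * Real.Gamma x
        - (deriv Complex.Gamma x).re * (deriv Complex.Gamma x).re) / (Real.Gamma x) ^ 2) x := by
  have hG : Real.Gamma x ≠ 0 := (Real.Gamma_pos_of_pos hx).ne'
  have h := (hasDerivAt_P hx).div (hasDerivAt_realGamma hx) hG
  refine h.congr_of_eventuallyEq ?_
  filter_upwards [eventually_gt_nhds hx] with y hy
  exact digamma_eq hy

lemma trigamma_eq {x : ℝ} (hx : 0 < x) :
    trigamma x = ((deriv (deriv Complex.Gamma) x).re * Real.Gamma x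
        - (deriv Complex.Gamma x).re * (deriv Complex.Gamma x).re) / (Real.Gamma x) ^ 2 :=
  (hasDerivAt_digamma hx).deriv

lemma hasDerivAt_digamma' {x : ℝ} (hx : 0 < x) :
    HasDerivAt digamma (trigamma x) x := (trigamma_eq hx) ▸ hasDerivAt_digamma hx

lemma continuousAt_digamma {x : ℝ} (hx : 0 < x) : ContinuousAt digamma x :=
  (hasDerivAt_digamma hx).continuousAt

lemma continuousAt_trigamma {x : ℝ} (hx : 0 < x) : ContinuousAt trigamma x := by
  have hc : ContinuousAt (fun y : ℝ => ((deriv (deriv Complex.Gamma) y).re * Real.Gamma y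
        - (deriv Complex.Gamma y).re * (deriv Complex.Gamma y).re) / (Real.Gamma y) ^ 2) x := by
    have h1 : ContinuousAt (fun y : ℝ => (deriv (deriv Complex.Gamma) y).re) x :=
      Complex.continuous_re.continuousAt.comp
        (((gammaC_deriv2_analytic _ (memU hx)).differentiableAt).continuousAt.comp
          Complex.continuous_ofReal.continuousAt)
    have h2 : ContinuousAt (fun y : ℝ => (deriv Complex.Gamma y).re) x :=
      (hasDerivAt_P hx).continuousAt
    have h3 : ContinuousAt Real.Gamma x := (hasDerivAt_realGamma hx).continuousAt
    exact ((h1.mul h3).sub (h2.mul h2)).div (h3.pow 2)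
      (by positivity)
  refine hc.congr ?_
  filter_upwards [eventually_gt_nhds hx] with y hy
  exact (trigamma_eq hy).symm

lemma digamma_rec {x : ℝ} (hx : 0 < x) : digamma x = digamma (x + 1) - 1 / x := by
  have hGx : Real.Gamma x ≠ 0 := (Real.Gamma_pos_of_pos hx).ne'
  have hG := hasDerivAt_realGamma hx
  have h1 : HasDerivAt (fun y : ℝ => Real.Gamma (y + 1))
      (Real.Gamma x + x * (deriv Complex.Gamma x).re) x := by
    have h2 : HasDerivAt (fun y : ℝ => y * Real.Gamma y)
        (1 * Real.Gamma x + x * (deriv Complex.Gamma x).re) x := (hasDerivAt_id x).mul hG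
    rw [one_mul] at h2
    refine h2.congr_of_eventuallyEq ?_
    filter_upwards [eventually_gt_nhds hx] with y hy
    rw [Real.Gamma_add_one hy.ne']
  have h6 := (hasDerivAt_realGamma (show (0:ℝ) < x + 1 by linarith)).comp_add_const x 1
  have h4 : deriv Real.Gamma (x + 1) = Real.Gamma x + x * (deriv Complex.Gamma x).re := by
    rw [(hasDerivAt_realGamma (show (0:ℝ) < x + 1 by linarith)).deriv]
    exact h6.unique h1
  rw [digamma, digamma, h4, hG.deriv, Real.Gamma_add_one hx.ne']
  field_simp
  ring

lemma trigamma_rec {x : ℝ} (hx : 0 < x) : trigamma x = trigamma (x + 1) + 1 / x ^ 2 := by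
  have h1 : HasDerivAt (fun y : ℝ => digamma (y + 1)) (trigamma (x + 1)) x := by
    have := (hasDerivAt_digamma' (by linarith : (0:ℝ) < x + 1)).comp_add_const x 1
    exact this
  have h2 : HasDerivAt (fun y : ℝ => digamma (y + 1) - 1 / y)
      (trigamma (x + 1) + 1 / x ^ 2) x := by
    have hinv : HasDerivAt (fun y : ℝ => 1 / y) (-(1 / x ^ 2)) x := by
      simpa [one_div, sq] using hasDerivAt_inv hx.ne'
    exact (h1.sub hinv).congr_deriv (by ring)
  have h3 : HasDerivAt digamma (trigamma (x + 1) + 1 / x ^ 2) x := by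
    refine h2.congr_of_eventuallyEq ?_
    filter_upwards [eventually_gt_nhds hx] with y hy
    exact digamma_rec hy
  rw [trigamma, h3.deriv]

lemma hasDerivAt_logGamma {x : ℝ} (hx : 0 < x) :
    HasDerivAt (fun y => Real.log (Real.Gamma y)) (digamma x) x := by
  have := (hasDerivAt_realGamma hx).log (Real.Gamma_pos_of_pos hx).ne'
  rwa [digamma_eq hx]

lemma digamma_mono {a b : ℝ} (ha : 0 < a) (hab : a < b) : digamma a ≤ digamma b := by
  have hc := Real.convexOn_log_Gamma
  have hb : 0 < b := ha.trans hab
  have hda : deriv (Real.log ∘ Real.Gamma) a = digamma a := by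
    simpa [Function.comp_def] using (hasDerivAt_logGamma ha).deriv
  have hdb : deriv (Real.log ∘ Real.Gamma) b = digamma b := by
    simpa [Function.comp_def] using (hasDerivAt_logGamma hb).deriv
  have h1 := hc.deriv_le_slope (Set.mem_Ioi.mpr ha) (Set.mem_Ioi.mpr hb) hab
    (by simpa [Function.comp_def] using (hasDerivAt_logGamma ha).differentiableAt)
  have h2 := hc.slope_le_deriv (Set.mem_Ioi.mpr ha) (Set.mem_Ioi.mpr hb) hab
    (by simpa [Function.comp_def] using (hasDerivAt_logGamma hb).differentiableAt)
  rw [hda] at h1; rw [hdb] at h2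
  linarith

lemma trigamma_nonneg {x : ℝ} (hx : 0 < x) : 0 ≤ trigamma x := by
  have h := hasDerivAt_digamma' hx
  have hslope := hasDerivAt_iff_tendsto_slope.mp h
  have hs2 : Tendsto (slope digamma x) (𝓝[>] x) (𝓝 (trigamma x)) :=
    hslope.mono_left (nhdsWithin_mono x fun y hy => ne_of_gt hy)
  refine ge_of_tendsto hs2 ?_
  · filter_upwards [self_mem_nhdsWithin] with y hy
    have hyx : x < y := hy
    rw [slope_def_field]
    have := digamma_mono hx hyx
    have : 0 ≤ digamma y - digamma x := by linarith
    exact div_nonneg this (by linarith)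

lemma digamma_one : digamma 1 = -Real.eulerMascheroniConstant := by
  rw [digamma, Real.hasDerivAt_Gamma_one.deriv, Real.Gamma_one, div_one]

lemma digamma_one_half : digamma (1 / 2) = -(Real.eulerMascheroniConstant + 2 * Real.log 2) := by
  have hπ : (0:ℝ) < √π := Real.sqrt_pos.mpr Real.pi_pos
  rw [digamma, Real.hasDerivAt_Gamma_one_half.deriv, Real.Gamma_one_half_eq]
  field_simp

lemma digamma_ge_neg_gamma {x : ℝ} (hx : 1 < x) :
    -Real.eulerMascheroniConstant ≤ digamma x := by
  rw [← digamma_one]; exact digamma_mono one_pos hx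

lemma hfun_lower {x : ℝ} (hx : 1 ≤ x) :
    47 / 225 * x ^ 2 - 947 / 225 * x - 2 ≤ hfun x := by
  have hx1 : (0:ℝ) < 1 + x := by linarith
  set s : ℝ := 1 / (1 + x) with hs
  have hs0 : 0 < s := by positivity
  have hs2 : s ≤ 1 / 2 := by
    rw [hs, div_le_div_iff₀ hx1 two_pos]; linarith
  have hinv : 1 / s = 1 + x := by rw [hs]; field_simp
  have e1 : digamma s = digamma (s + 1) - (1 + x) := by rw [digamma_rec hs0, hinv]
  have e2 : trigamma s = trigamma (s + 1) + (1 + x) ^ 2 := by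
    rw [trigamma_rec hs0]; congr 1; rw [← hinv]; ring
  have e3 : trigamma (s + 1) = trigamma (s + 2) + 1 / (s + 1) ^ 2 := by
    have := trigamma_rec (show (0:ℝ) < s + 1 by linarith)
    rw [this]; ring_nf
  have e4 : trigamma (s + 2) = trigamma (s + 3) + 1 / (s + 2) ^ 2 := by
    have := trigamma_rec (show (0:ℝ) < s + 2 by linarith)
    rw [this]; ring_nf
  have h5 : (136:ℝ) / 225 ≤ trigamma (s + 1) := by
    rw [e3, e4]
    have h6 : 0 ≤ trigamma (s + 3) := trigamma_nonneg (by linarith)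
    have h7 : (4:ℝ) / 9 ≤ 1 / (s + 1) ^ 2 := by
      rw [div_le_div_iff₀ (by norm_num) (by positivity)]
      nlinarith
    have h8 : (4:ℝ) / 25 ≤ 1 / (s + 2) ^ 2 := by
      rw [div_le_div_iff₀ (by norm_num) (by positivity)]
      nlinarith
    linarith
  have h9 : 0 ≤ Real.eulerMascheroniConstant + digamma (s + 1) := by
    have := digamma_ge_neg_gamma (show (1:ℝ) < s + 1 by linarith)
    linarith
  have P1 : 0 ≤ 2 * (1 + x ^ 3) * (Real.eulerMascheroniConstant + digamma (s + 1)) :=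
    mul_nonneg (by nlinarith [pow_nonneg (show (0:ℝ) ≤ x by linarith) 3] : (0:ℝ) ≤ 2 * (1 + x ^ 3)) h9
  have P2 : 2 * (x ^ 2 - x) * (136 / 225) ≤ 2 * (x ^ 2 - x) * trigamma (s + 1) := by
    have hxx : (0:ℝ) ≤ x ^ 2 - x := by nlinarith
    have := mul_le_mul_of_nonneg_left h5 (by linarith : (0:ℝ) ≤ 2 * (x ^ 2 - x))
    linarith [mul_le_mul_of_nonneg_left h5 (by linarith : (0:ℝ) ≤ 2 * (x ^ 2 - x))]
  rw [hfun, ← hs, e1, e2]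
  nlinarith [P1, P2]

lemma hfun_tendsto : Tendsto hfun atTop atTop := by
  have hpoly : Tendsto (fun x : ℝ => 47 / 225 * x ^ 2 - 947 / 225 * x - 2) atTop atTop := by
    have h2 : Tendsto (fun x : ℝ => 47 / 225 * x - 947 / 225) atTop atTop :=
      tendsto_atTop_add_const_right _ _ (tendsto_id.const_mul_atTop (by norm_num))
    have h1 : Tendsto (fun x : ℝ => x * (47 / 225 * x - 947 / 225) - 2) atTop atTop :=
      tendsto_atTop_add_const_right _ _ (tendsto_id.atTop_mul_atTop₀ h2)
    exact h1.congr (fun x => by ring)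
  refine tendsto_atTop_mono' atTop ?_ hpoly
  filter_upwards [eventually_ge_atTop (1:ℝ)] with x hx
  exact hfun_lower hx

lemma continuousAt_hfun {x : ℝ} (hx : 0 < x) : ContinuousAt hfun x := by
  have h1 : ContinuousAt (fun t : ℝ => 1 / (1 + t)) x := by
    exact (continuous_const.continuousAt).div (by fun_prop) (by positivity)
  have hv : 0 < 1 / (1 + x) := by positivity
  have hd : ContinuousAt (fun t : ℝ => digamma (1 / (1 + t))) x := by
    exact ContinuousAt.comp (f := fun t : ℝ => 1 / (1 + t)) (continuousAt_digamma hv) h1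
  have ht : ContinuousAt (fun t : ℝ => trigamma (1 / (1 + t))) x := by
    exact ContinuousAt.comp (f := fun t : ℝ => 1 / (1 + t)) (continuousAt_trigamma hv) h1
  unfold hfun
  fun_prop

lemma hfun_pos (ℓ : ℝ) (hℓpos : 0 < ℓ) (huniq : ∀ t > (0 : ℝ), hfun t = 0 → t = ℓ)
    {x : ℝ} (hx : ℓ < x) : 0 < hfun x := by
  by_contra hle
  push_neg at hle
  have hx0 : 0 < x := hℓpos.trans hx
  rcases lt_or_eq_of_le hle with hlt | heq
  · obtain ⟨y, hy1, hy2⟩ := ((hfun_tendsto.eventually_gt_atTop 0).and (eventually_ge_atTop x)).exists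
    have hcont : ContinuousOn hfun (Set.Icc x y) := fun t ht =>
      (continuousAt_hfun (hx0.trans_le ht.1)).continuousWithinAt
    have h0 : (0:ℝ) ∈ Set.Icc (hfun x) (hfun y) := ⟨hlt.le, hy1.le⟩
    obtain ⟨t, htmem, htval⟩ := intermediate_value_Icc hy2 hcont h0
    have : t = ℓ := huniq t (hx0.trans_le htmem.1) htval
    exact absurd (this ▸ (hx.trans_le htmem.1)) (lt_irrefl ℓ)
  · exact absurd (huniq x hx0 heq) (ne_of_gt hx)

lemma Lcoeff_eq {r₁ r₂ : ℝ} (h2 : 0 < r₂) (h12 : r₂ < r₁) :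
    Lcoeff r₁ r₂ = r₂ ^ 3 * hfun (r₁ / r₂) := by
  rw [Lcoeff]
  have h1 : 0 < r₁ := h2.trans h12
  have hsum : 0 < r₁ + r₂ := by linarith
  have harg : r₂ / (r₁ + r₂) = 1 / (1 + r₁ / r₂) := by
    field_simp
    ring
  rw [hfun, ← harg]
  generalize digamma (r₂ / (r₁ + r₂)) = D
  generalize trigamma (r₂ / (r₁ + r₂)) = T
  field_simp
  ring

end

theorem coefficient_positive (ℓ : ℝ) (hℓpos : 0 < ℓ) (hroot : hfun ℓ = 0)
    (huniq : ∀ t > (0 : ℝ), hfun t = 0 → t = ℓ) :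
    hfun 1 < 0 ∧ Tendsto hfun atTop atTop ∧
      ∀ r₁ r₂ : ℝ, 0 < r₂ → r₂ < r₁ → ℓ < r₁ / r₂ → 0 < Lcoeff r₁ r₂ := by
  refine ⟨?_, hfun_tendsto, ?_⟩
  · have hlog : (1:ℝ)/4 < Real.log 2 := by
      have := Real.log_two_gt_d9
      linarith
    have h1 : hfun 1 = 2 - 8 * Real.log 2 := by
      rw [hfun, show (1:ℝ)/(1+1) = 1/2 by norm_num, digamma_one_half]
      ring
    linarith
  · intro r₁ r₂ hr2 hr12 hx
    rw [Lcoeff_eq hr2 hr12]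
    exact mul_pos (by positivity) (hfun_pos ℓ hℓpos huniq hx)
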